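/- arXiv:1603.02101 — 2 statements merged into one kernel-verified Lean document; each statement's English description precedes it below -/
import Mathlib

section
/- Let a : ℝ → ℝ be continuous, 1-periodic, with 0 < c ≤ a(x). For ε > 0 let u_ε be the solution on [0,1] of (a(x/ε) u_ε')' = 0 with u_ε(0)=0, u_ε(1)=1. Then as ε = 1/n with n → ∞ (n a positive integer), u_{1/n} converges uniformly on [0,1] to u₀(x) = x, the solution of the constant-coefficient equation with coefficient equal to the harmonic mean of a. -/
open intervalIntegral Set Filter

theorem stmt15 (a : ℝ → ℝ) (c : ℝ) (hc : 0 < c)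
    (ha : Continuous a) (hper : Function.Periodic a 1) (hca : ∀ x, c ≤ a x) :
    TendstoUniformlyOn
      (fun (n : ℕ) (x : ℝ) =>
        (∫ t in (0:ℝ)..1, (a (n * t))⁻¹)⁻¹ * ∫ t in (0:ℝ)..x, (a (n * t))⁻¹)
      (fun x => x) atTop (Icc (0:ℝ) 1) := by
  set g : ℝ → ℝ := fun t => (a t)⁻¹ with hg_def
  have ha0 : ∀ x, a x ≠ 0 := fun x => ne_of_gt (lt_of_lt_of_le hc (hca x))
  have hg_cont : Continuous g := ha.inv₀ ha0
  have hg_per : Function.Periodic g 1 := fun x => by simp only [hg_def, hper x]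
  have hg_int : ∀ x y : ℝ, IntervalIntegrable g MeasureTheory.volume x y :=
    fun x y => hg_cont.intervalIntegrable x y
  have hg_nonneg : ∀ t, 0 ≤ g t := fun t => inv_nonneg.2 (le_of_lt (lt_of_lt_of_le hc (hca t)))
  have hg_le : ∀ t, g t ≤ c⁻¹ := fun t =>
    inv_anti₀ hc (hca t)
  set M : ℝ := ∫ t in (0:ℝ)..1, g t with hM_def
  have hM_pos : 0 < M := by
    apply intervalIntegral_pos_of_pos_on (hg_int 0 1)
    · intro x _
      exact inv_pos.2 (lt_of_lt_of_le hc (hca x))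
    · norm_num
  -- error function
  set E : ℝ → ℝ := fun y => (∫ t in (0:ℝ)..y, g t) - y * M with hE_def
  have hE_per : Function.Periodic E 1 := by
    intro y
    have h1 : (∫ t in (0:ℝ)..(y+1), g t)
        = (∫ t in (0:ℝ)..y, g t) + ∫ t in y..(y+1), g t :=
      (integral_add_adjacent_intervals (hg_int 0 y) (hg_int y (y+1))).symm
    have h2 : (∫ t in y..(y+1), g t) = M := by
      have := hg_per.intervalIntegral_add_eq y 0
      simpa using this
    simp only [hE_def, h1, h2]
    ring
  have hE_bound01 : ∀ y ∈ Icc (0:ℝ) 1, |E y| ≤ 2 * c⁻¹ := by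
    intro y hy
    have hI : |∫ t in (0:ℝ)..y, g t| ≤ c⁻¹ := by
      have := intervalIntegral.norm_integral_le_of_norm_le_const
        (C := c⁻¹) (f := g) (a := (0:ℝ)) (b := y) ?_
      · calc |∫ t in (0:ℝ)..y, g t| ≤ c⁻¹ * |y - 0| := this
          _ ≤ c⁻¹ * 1 := by
              apply mul_le_mul_of_nonneg_left _ (inv_nonneg.2 hc.le)
              rw [sub_zero, abs_of_nonneg hy.1]; exact hy.2
          _ = c⁻¹ := mul_one _
      · intro x _
        rw [Real.norm_eq_abs, abs_of_nonneg (hg_nonneg x)]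
        exact hg_le x
    have hM_le : M ≤ c⁻¹ := by
      have := intervalIntegral.norm_integral_le_of_norm_le_const
        (C := c⁻¹) (f := g) (a := (0:ℝ)) (b := 1) ?_
      · have : |M| ≤ c⁻¹ * |1 - 0| := this
        rw [abs_of_nonneg hM_pos.le] at this
        simpa using this
      · intro x _
        rw [Real.norm_eq_abs, abs_of_nonneg (hg_nonneg x)]
        exact hg_le x
    have hyM : |y * M| ≤ c⁻¹ := by
      rw [abs_of_nonneg (mul_nonneg hy.1 hM_pos.le)]
      calc y * M ≤ 1 * M := mul_le_mul_of_nonneg_right hy.2 hM_pos.le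
        _ = M := one_mul _
        _ ≤ c⁻¹ := hM_le
    calc |E y| ≤ |∫ t in (0:ℝ)..y, g t| + |y * M| := abs_sub _ _
      _ ≤ c⁻¹ + c⁻¹ := add_le_add hI hyM
      _ = 2 * c⁻¹ := by ring
  have hE_bound : ∀ y, |E y| ≤ 2 * c⁻¹ := by
    intro y
    have h1 : E (y - (⌊y⌋ : ℝ) * 1) = E y := hE_per.sub_int_mul_eq ⌊y⌋
    have h2 : y - (⌊y⌋ : ℝ) * 1 ∈ Icc (0:ℝ) 1 := by
      rw [mul_one]
      constructor
      · linarith [Int.floor_le y]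
      · linarith [Int.lt_floor_add_one y]
    calc |E y| = |E (y - (⌊y⌋:ℝ) * 1)| := by rw [h1]
      _ ≤ 2 * c⁻¹ := hE_bound01 _ h2
  -- key identity for n ≥ 1
  have hkey : ∀ n : ℕ, 1 ≤ n → ∀ x ∈ Icc (0:ℝ) 1,
      (∫ t in (0:ℝ)..1, (a (n * t))⁻¹)⁻¹ * (∫ t in (0:ℝ)..x, (a (n * t))⁻¹)
        = x + E (n * x) / (n * M) := by
    intro n hn x _
    have hn0 : (n : ℝ) ≠ 0 := Nat.cast_ne_zero.2 (by omega)
    have hcomp : ∀ y : ℝ, (∫ t in (0:ℝ)..y, (a (n * t))⁻¹)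
        = (n:ℝ)⁻¹ * ∫ u in (0:ℝ)..(n * y), g u := by
      intro y
      have := intervalIntegral.integral_comp_mul_left (f := g) (a := (0:ℝ)) (b := y)
        (c := (n:ℝ)) hn0
      simpa [mul_zero, smul_eq_mul] using this
    have hden : (∫ t in (0:ℝ)..1, (a (n * t))⁻¹) = M := by
      rw [hcomp 1]
      have hint : (∫ u in (0:ℝ)..((n:ℤ) • (1:ℝ)), g u) = (n:ℤ) • M := by
        have := hg_per.intervalIntegral_add_zsmul_eq (n:ℤ) 0 hg_int
        simpa using this
      have : (∫ u in (0:ℝ)..((n:ℝ) * 1), g u) = n * M := by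
        simpa [zsmul_eq_mul] using hint
      rw [this]
      field_simp
    have hnum : (∫ t in (0:ℝ)..x, (a (n * t))⁻¹)
        = x * M + E (n * x) / n := by
      rw [hcomp x]
      have : (∫ u in (0:ℝ)..((n:ℝ) * x), g u) = (n * x) * M + E (n * x) := by
        simp [hE_def]
      rw [this]
      field_simp
    rw [hden, hnum]
    have hM0 : M ≠ 0 := ne_of_gt hM_pos
    field_simp
  -- conclude
  rw [Metric.tendstoUniformlyOn_iff]
  intro ε hε
  have hlim : Tendsto (fun n : ℕ => 2 * c⁻¹ / M * (1 / (n:ℝ))) atTop (nhds 0) := by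
    have : Tendsto (fun n : ℕ => 1 / (n:ℝ)) atTop (nhds 0) := tendsto_one_div_atTop_nhds_zero_nat
    simpa using this.const_mul (2 * c⁻¹ / M)
  have hev : ∀ᶠ n : ℕ in atTop, 2 * c⁻¹ / M * (1 / (n:ℝ)) < ε :=
    hlim.eventually (eventually_lt_nhds hε)
  filter_upwards [hev, eventually_ge_atTop 1] with n hn1 hn2 x hx
  rw [Real.dist_eq, hkey n hn2 x hx]
  have hn0 : (0:ℝ) < n := by exact_mod_cast hn2
  have : |x - (x + E (n * x) / (n * M))| = |E (n * x)| / (n * M) := by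
    have h : x - (x + E (n * x) / (n * M)) = -(E (n * x) / (n * M)) := by ring
    rw [h, abs_neg, abs_div, abs_of_pos (mul_pos hn0 hM_pos)]
  rw [this]
  calc |E (↑n * x)| / (↑n * M) ≤ (2 * c⁻¹) / (↑n * M) := by
        exact div_le_div_of_nonneg_right (hE_bound _) (mul_pos hn0 hM_pos).le
    _ = 2 * c⁻¹ / M * (1 / ↑n) := by field_simp
    _ < ε := hn1
end

section
/- Let a ∈ ℂ^N be a vector with all entries nonzero, and D = diag(a). Let F = (P; Q) be a unitary splitting. Then the homogenized coarse operator of D⁻¹, namely P D⁻¹ P* − P D⁻¹ Q*(Q D⁻¹ Q*)⁻¹ Q D⁻¹ P*, equals the inverse of P D P* whenever both P D P* and Q D⁻¹ Q* are invertible. -/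
open Matrix

theorem stmt19 {N k : ℕ} (hk : k ≤ N)
    (a : Fin N → ℂ) (ha : ∀ i, a i ≠ 0)
    (P : Matrix (Fin k) (Fin N) ℂ) (Q : Matrix (Fin (N - k)) (Fin N) ℂ)
    (hF1 : (fromRows P Q)ᴴ * (fromRows P Q) = 1)
    (hF2 : (fromRows P Q) * (fromRows P Q)ᴴ = 1)
    (hPDP : IsUnit (P * diagonal a * Pᴴ))
    (hQDQ : IsUnit (Q * (diagonal a)⁻¹ * Qᴴ)) :
    P * (diagonal a)⁻¹ * Pᴴ -
        P * (diagonal a)⁻¹ * Qᴴ * (Q * (diagonal a)⁻¹ * Qᴴ)⁻¹ *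
          (Q * (diagonal a)⁻¹ * Pᴴ) =
      (P * diagonal a * Pᴴ)⁻¹ := by
  set D := diagonal a with hDdef
  have hDdet : IsUnit D.det := by
    rw [hDdef, det_diagonal]
    exact (Finset.prod_ne_zero_iff.mpr fun i _ => ha i).isUnit
  have hDD : D * D⁻¹ = 1 := mul_nonsing_inv _ hDdet
  have hDinvD : D⁻¹ * D = 1 := nonsing_inv_mul _ hDdet
  -- block identities from unitarity
  have h1 : Pᴴ * P + Qᴴ * Q = 1 := by
    rw [conjTranspose_fromRows_eq_fromCols_conjTranspose,
      fromCols_mul_fromRows] at hF1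
    exact hF1
  have h2 : fromBlocks (P * Pᴴ) (P * Qᴴ) (Q * Pᴴ) (Q * Qᴴ) =
      fromBlocks 1 0 0 1 := by
    rw [fromBlocks_one, ← fromRows_mul_fromCols,
      ← conjTranspose_fromRows_eq_fromCols_conjTranspose]
    exact hF2
  rw [fromBlocks_inj] at h2
  obtain ⟨hPP, hPQ, hQP, hQQ⟩ := h2
  have key : Pᴴ * P = 1 - Qᴴ * Q := eq_sub_of_add_eq h1
  -- right-associated rewrite rules
  have s1 : ∀ (X : Matrix (Fin N) (Fin k) ℂ),
      Pᴴ * (P * X) = X - Qᴴ * (Q * X) := fun X => by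
    rw [← Matrix.mul_assoc, key, Matrix.sub_mul, Matrix.one_mul, Matrix.mul_assoc]
  have s2 : ∀ (X : Matrix (Fin N) (Fin k) ℂ),
      D⁻¹ * (D * X) = X := fun X => by
    rw [← Matrix.mul_assoc, hDinvD, Matrix.one_mul]
  have hSdet : IsUnit (Q * (D⁻¹ * Qᴴ)).det := by
    rw [← Matrix.mul_assoc]
    exact hQDQ.map detMonoidHom
  have s4 : ∀ (X : Matrix (Fin (N - k)) (Fin k) ℂ),
      (Q * (D⁻¹ * Qᴴ))⁻¹ * (Q * (D⁻¹ * (Qᴴ * X))) = X := fun X => by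
    rw [show Q * (D⁻¹ * (Qᴴ * X)) = (Q * (D⁻¹ * Qᴴ)) * X by
        simp only [Matrix.mul_assoc],
      ← Matrix.mul_assoc, nonsing_inv_mul _ hSdet, Matrix.one_mul]
  have hmul : (P * D⁻¹ * Pᴴ -
      P * D⁻¹ * Qᴴ * (Q * D⁻¹ * Qᴴ)⁻¹ * (Q * D⁻¹ * Pᴴ)) *
      (P * D * Pᴴ) = 1 := by
    simp only [Matrix.sub_mul, Matrix.mul_assoc, s1, Matrix.mul_sub,
      Matrix.sub_mul, s2, s4, hPP, hQP, Matrix.zero_mul, Matrix.mul_zero,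
      zero_sub, Matrix.mul_neg, Matrix.neg_mul, sub_neg_eq_add,
      Matrix.mul_one, Matrix.one_mul]
    abel
  exact (inv_eq_left_inv hmul).symm
end
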